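/- arXiv:1609.04593 — 2 statements merged into one kernel-verified Lean document; each statement's English description precedes it below -/
import Mathlib

section
/- Let G be a connected finite graph with a shortest path v_0,...,v_t of eccentricity k. Let P be a shortest path of G, and let i_min (resp. i_max) be the smallest (resp. largest) index i such that d(v_i, P) ≤ k. Then every vertex of G at distance at most k from the subpath v_{i_min},...,v_{i_max} is at distance at most 3k from P. -/
open SimpleGraph

variable {V : Type*}

/-- Distance from a vertex `x` to (the support of) a walk `p`. -/
noncomputable def walkDist (G : SimpleGraph V) {u v : V} (x : V) (p : G.Walk u v) : ℕ :=
  sInf {n | ∃ w ∈ p.support, G.dist x w = n}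

/-- A walk is a shortest path when its length equals the distance between its ends. -/
noncomputable def IsShortestPath (G : SimpleGraph V) {u v : V} (p : G.Walk u v) : Prop :=
  p.length = G.dist u v

/-- Eccentricity of a walk: the largest distance from any vertex to the walk. -/
noncomputable def walkEcc [Fintype V] (G : SimpleGraph V) {u v : V} (p : G.Walk u v) : ℕ :=
  sSup {n | ∃ x : V, walkDist G x p = n}

/-- A diameter: a shortest path of maximum length among all distances. -/
noncomputable def IsDiameter [Fintype V] (G : SimpleGraph V) {u v : V} (p : G.Walk u v) : Prop :=
  IsShortestPath G p ∧ ∀ a b : V, G.dist a b ≤ p.length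

/-- `k(G)`: minimum eccentricity over all shortest paths. -/
noncomputable def minK [Fintype V] (G : SimpleGraph V) : ℕ :=
  sInf {n | ∃ (u v : V) (p : G.Walk u v), IsShortestPath G p ∧ walkEcc G p = n}

/-- `l(G)`: minimum eccentricity over all diameters. -/
noncomputable def minL [Fintype V] (G : SimpleGraph V) : ℕ :=
  sInf {n | ∃ (u v : V) (p : G.Walk u v), IsDiameter G p ∧ walkEcc G p = n}

/-- `s(G)`: maximum eccentricity over all diameters. -/
noncomputable def maxS [Fintype V] (G : SimpleGraph V) : ℕ :=
  sSup {n | ∃ (u v : V) (p : G.Walk u v), IsDiameter G p ∧ walkEcc G p = n}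

private lemma getVert_mem_support' {G : SimpleGraph V} {u v : V} (p : G.Walk u v) (n : ℕ) :
    p.getVert n ∈ p.support := by
  rw [SimpleGraph.Walk.mem_support_iff_exists_getVert]
  refine ⟨min n p.length, ?_, min_le_right _ _⟩
  rcases le_total n p.length with h | h
  · rw [min_eq_left h]
  · rw [min_eq_right h, p.getVert_of_length_le h, p.getVert_length]

private lemma exists_of_walkDist_le {G : SimpleGraph V} {u v : V} {x : V} {p : G.Walk u v}
    {k : ℕ} (h : walkDist G x p ≤ k) : ∃ w ∈ p.support, G.dist x w ≤ k := by
  unfold walkDist at h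
  have hne : {n | ∃ w ∈ p.support, G.dist x w = n}.Nonempty :=
    ⟨G.dist x u, u, p.start_mem_support, rfl⟩
  obtain ⟨w, hw, hd⟩ := Nat.sInf_mem hne
  exact ⟨w, hw, hd.le.trans h⟩

private lemma walkDist_le_of {G : SimpleGraph V} {u v : V} {x w : V} {p : G.Walk u v}
    (hw : w ∈ p.support) {k : ℕ} (h : G.dist x w ≤ k) : walkDist G x p ≤ k := by
  unfold walkDist
  exact le_trans (Nat.sInf_le ⟨w, hw, rfl⟩) h

private lemma dist_getVert_le {G : SimpleGraph V} (hG : G.Connected) :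
    ∀ {u v : V} (p : G.Walk u v) (a b : ℕ), a ≤ b →
      G.dist (p.getVert a) (p.getVert b) ≤ b - a := by
  intro u v p
  induction p with
  | nil => intro a b _; simp [SimpleGraph.Walk.getVert, SimpleGraph.dist_self]
  | @cons u w v h q ih =>
    intro a b hab
    match a, b with
    | 0, 0 => simp
    | 0, (b+1) =>
      have h1 : G.dist u w = 1 := SimpleGraph.dist_eq_one_iff_adj.mpr h
      have h2 : G.dist w (q.getVert b) ≤ b - 0 := by
        have := ih 0 b (Nat.zero_le b)
        simpa using this
      calc G.dist ((SimpleGraph.Walk.cons h q).getVert 0)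
            ((SimpleGraph.Walk.cons h q).getVert (b+1))
          = G.dist u (q.getVert b) := by
            rw [SimpleGraph.Walk.getVert_zero, SimpleGraph.Walk.getVert_cons_succ]
        _ ≤ G.dist u w + G.dist w (q.getVert b) := hG.dist_triangle
        _ ≤ (b + 1) - 0 := by omega
    | (a+1), (b+1) =>
      have := ih a b (by omega)
      simpa [SimpleGraph.Walk.getVert_cons_succ] using this

private lemma dist_getVert_ge {G : SimpleGraph V} (hG : G.Connected) {u v : V}
    (p : G.Walk u v) (hp : IsShortestPath G p) (a b : ℕ) (hab : a ≤ b) (hb : b ≤ p.length) :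
    b - a ≤ G.dist (p.getVert a) (p.getVert b) := by
  have h1 : G.dist u (p.getVert a) ≤ a := by
    have := dist_getVert_le hG p 0 a (Nat.zero_le a)
    simpa using this
  have h2 : G.dist (p.getVert b) v ≤ p.length - b := by
    have := dist_getVert_le hG p b p.length hb
    simpa using this
  have t1 : G.dist u v ≤ G.dist u (p.getVert b) + G.dist (p.getVert b) v := hG.dist_triangle
  have t2 : G.dist u (p.getVert b) ≤ G.dist u (p.getVert a)
      + G.dist (p.getVert a) (p.getVert b) := hG.dist_triangle
  have h4 : p.length = G.dist u v := hp
  omega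

private lemma ivt_up (F : ℕ → ℕ) (k i : ℕ) (hstep : ∀ n, F (n+1) ≤ F n + (2*k+1)) :
    ∀ (d a : ℕ), F a ≤ i → i ≤ F (a + d) → ∃ n, F n ≤ i + k ∧ i ≤ F n + k := by
  intro d
  induction d with
  | zero => intro a h1 h2; rw [Nat.add_zero] at h2; exact ⟨a, by omega, by omega⟩
  | succ d ihd =>
    intro a h1 h2
    by_cases hc : F (a+1) ≤ i
    · refine ihd (a+1) hc ?_
      have : a + 1 + d = a + (d + 1) := by omega
      rwa [this]
    · push_neg at hc
      have hs := hstep a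
      by_cases h' : i ≤ F a + k
      · exact ⟨a, by omega, by omega⟩
      · exact ⟨a+1, by omega, by omega⟩

private lemma ivt_down (F : ℕ → ℕ) (k i : ℕ) (hstep : ∀ n, F n ≤ F (n+1) + (2*k+1)) :
    ∀ (d a : ℕ), i ≤ F a → F (a + d) ≤ i → ∃ n, F n ≤ i + k ∧ i ≤ F n + k := by
  intro d
  induction d with
  | zero => intro a h1 h2; rw [Nat.add_zero] at h2; exact ⟨a, by omega, by omega⟩
  | succ d ihd =>
    intro a h1 h2
    by_cases hc : i ≤ F (a+1)
    · refine ihd (a+1) hc ?_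
      have : a + 1 + d = a + (d + 1) := by omega
      rwa [this]
    · push_neg at hc
      have hs := hstep a
      by_cases h' : F a ≤ i + k
      · exact ⟨a, by omega, by omega⟩
      · exact ⟨a+1, by omega, by omega⟩

theorem stmt1 [Fintype V] (G : SimpleGraph V) (hG : G.Connected)
    {v0 vt x0 xs : V} (P : G.Walk v0 vt) (hP : IsShortestPath G P) (k : ℕ)
    (hecc : ∀ z : V, walkDist G z P ≤ k)
    (Q : G.Walk x0 xs) (hQ : IsShortestPath G Q)
    (imin imax : ℕ)
    (himin1 : imin ≤ P.length) (himin2 : walkDist G (P.getVert imin) Q ≤ k)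
    (himin3 : ∀ i < imin, ¬ walkDist G (P.getVert i) Q ≤ k)
    (himax1 : imax ≤ P.length) (himax2 : walkDist G (P.getVert imax) Q ≤ k)
    (himax3 : ∀ i, i ≤ P.length → imax < i → ¬ walkDist G (P.getVert i) Q ≤ k) :
    ∀ z : V, (∃ i, imin ≤ i ∧ i ≤ imax ∧ G.dist z (P.getVert i) ≤ k) →
      walkDist G z Q ≤ 3 * k := by
  intro z hz
  obtain ⟨i, hi1, hi2, hzi⟩ := hz
  -- every vertex on Q is within k of some P.getVert j with imin ≤ j ≤ imax
  have key : ∀ n : ℕ, ∃ j : ℕ, j ≤ P.length ∧ imin ≤ j ∧ j ≤ imax ∧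
      G.dist (Q.getVert n) (P.getVert j) ≤ k := by
    intro n
    obtain ⟨w, hw, hdw⟩ := exists_of_walkDist_le (hecc (Q.getVert n))
    obtain ⟨j, hj1, hj2⟩ := SimpleGraph.Walk.mem_support_iff_exists_getVert.mp hw
    have hdw' : G.dist (Q.getVert n) (P.getVert j) ≤ k := by rw [hj1]; exact hdw
    have hdq : walkDist G (P.getVert j) Q ≤ k :=
      walkDist_le_of (getVert_mem_support' Q n) (by rw [SimpleGraph.dist_comm]; exact hdw')
    refine ⟨j, hj2, ?_, ?_, hdw'⟩
    · by_contra hlt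
      exact himin3 j (by omega) hdq
    · by_contra hlt
      exact himax3 j hj2 (by omega) hdq
  choose F hF1 hF2 hF3 hF4 using key
  have hPle : ∀ a b, a ≤ b → G.dist (P.getVert a) (P.getVert b) ≤ b - a :=
    fun a b h => dist_getVert_le hG P a b h
  have hPge : ∀ a b, a ≤ b → b ≤ P.length → b - a ≤ G.dist (P.getVert a) (P.getVert b) :=
    fun a b h hb => dist_getVert_ge hG P hP a b h hb
  -- step bound for F
  have hFstep : ∀ n, F (n+1) ≤ F n + (2*k+1) ∧ F n ≤ F (n+1) + (2*k+1) := by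
    intro n
    have hq : G.dist (Q.getVert n) (Q.getVert (n+1)) ≤ 1 := by
      have := dist_getVert_le hG Q n (n+1) (Nat.le_succ n)
      omega
    have h1 : G.dist (P.getVert (F n)) (P.getVert (F (n+1))) ≤ 2*k+1 := by
      have t1a : G.dist (P.getVert (F n)) (Q.getVert (n+1)) ≤
          G.dist (P.getVert (F n)) (Q.getVert n) +
          G.dist (Q.getVert n) (Q.getVert (n+1)) := hG.dist_triangle
      have t1b := hF4 n
      rw [SimpleGraph.dist_comm] at t1b
      have t2 : G.dist (P.getVert (F n)) (P.getVert (F (n+1))) ≤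
          G.dist (P.getVert (F n)) (Q.getVert (n+1)) +
          G.dist (Q.getVert (n+1)) (P.getVert (F (n+1))) := hG.dist_triangle
      have := hF4 (n+1)
      omega
    rcases le_total (F n) (F (n+1)) with h | h
    · have := hPge _ _ h (hF1 (n+1))
      omega
    · have := hPge _ _ h (hF1 n)
      rw [SimpleGraph.dist_comm] at this
      omega
  -- endpoints on Q close to v_imin, v_imax
  obtain ⟨q1, hq1s, hq1d⟩ := exists_of_walkDist_le himin2
  obtain ⟨n1, hn1eq, hn1le⟩ := SimpleGraph.Walk.mem_support_iff_exists_getVert.mp hq1s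
  obtain ⟨q2, hq2s, hq2d⟩ := exists_of_walkDist_le himax2
  obtain ⟨n2, hn2eq, hn2le⟩ := SimpleGraph.Walk.mem_support_iff_exists_getVert.mp hq2s
  have hd1 : G.dist (P.getVert imin) (Q.getVert n1) ≤ k := by rw [hn1eq]; exact hq1d
  have hd2 : G.dist (P.getVert imax) (Q.getVert n2) ≤ k := by rw [hn2eq]; exact hq2d
  -- it suffices to find a vertex of Q within 3k of z
  suffices hgoal : ∃ m, G.dist z (Q.getVert m) ≤ 3 * k by
    obtain ⟨m, hm⟩ := hgoal
    exact walkDist_le_of (getVert_mem_support' Q m) hm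
  -- key finishing step: if F m is within k of i, the vertex Q.getVert m works
  have final : ∀ m : ℕ, F m ≤ i + k → i ≤ F m + k → G.dist z (Q.getVert m) ≤ 3 * k := by
    intro m h1 h2
    have hdiFm : G.dist (P.getVert i) (P.getVert (F m)) ≤ k := by
      rcases le_total i (F m) with h | h
      · have := hPle i (F m) h
        omega
      · have := hPle (F m) i h
        rw [SimpleGraph.dist_comm] at this
        omega
    have t1 : G.dist z (Q.getVert m) ≤ G.dist z (P.getVert i) +
        G.dist (P.getVert i) (Q.getVert m) := hG.dist_triangle
    have t2 : G.dist (P.getVert i) (Q.getVert m) ≤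
        G.dist (P.getVert i) (P.getVert (F m)) +
        G.dist (P.getVert (F m)) (Q.getVert m) := hG.dist_triangle
    have t3 := hF4 m
    rw [SimpleGraph.dist_comm] at t3
    omega
  by_cases hA : i ≤ imin + k
  · -- z is close to v_imin, hence to Q.getVert n1
    refine ⟨n1, ?_⟩
    have t0 : G.dist (P.getVert i) (P.getVert imin) ≤ i - imin := by
      have := hPle imin i hi1
      rw [SimpleGraph.dist_comm] at this
      omega
    have t1 : G.dist z (Q.getVert n1) ≤ G.dist z (P.getVert i) +
        G.dist (P.getVert i) (Q.getVert n1) := hG.dist_triangle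
    have t2 : G.dist (P.getVert i) (Q.getVert n1) ≤
        G.dist (P.getVert i) (P.getVert imin) +
        G.dist (P.getVert imin) (Q.getVert n1) := hG.dist_triangle
    omega
  by_cases hB : imax ≤ i + k
  · refine ⟨n2, ?_⟩
    have t0 : G.dist (P.getVert i) (P.getVert imax) ≤ imax - i := hPle i imax hi2
    have t1 : G.dist z (Q.getVert n2) ≤ G.dist z (P.getVert i) +
        G.dist (P.getVert i) (Q.getVert n2) := hG.dist_triangle
    have t2 : G.dist (P.getVert i) (Q.getVert n2) ≤
        G.dist (P.getVert i) (P.getVert imax) +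
        G.dist (P.getVert imax) (Q.getVert n2) := hG.dist_triangle
    omega
  push_neg at hA hB
  by_cases hC : i ≤ F n1
  · -- F n1 is within 2k of imin, hence within k of i
    have t1 : G.dist (P.getVert imin) (P.getVert (F n1)) ≤ 2*k := by
      have t2 : G.dist (P.getVert imin) (P.getVert (F n1)) ≤
          G.dist (P.getVert imin) (Q.getVert n1) +
          G.dist (Q.getVert n1) (P.getVert (F n1)) := hG.dist_triangle
      have := hF4 n1
      omega
    have t3 : F n1 - imin ≤ 2*k := by
      have := hPge imin (F n1) (hF2 n1) (hF1 n1)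
      omega
    exact ⟨n1, final n1 (by omega) (by omega)⟩
  by_cases hD : F n2 ≤ i
  · have t1 : G.dist (P.getVert (F n2)) (P.getVert imax) ≤ 2*k := by
      have t2 : G.dist (P.getVert (F n2)) (P.getVert imax) ≤
          G.dist (P.getVert (F n2)) (Q.getVert n2) +
          G.dist (Q.getVert n2) (P.getVert imax) := hG.dist_triangle
      have t4 := hF4 n2
      rw [SimpleGraph.dist_comm (u := P.getVert imax)] at hd2
      rw [SimpleGraph.dist_comm] at t4
      omega
    have t3 : imax - F n2 ≤ 2*k := by
      have := hPge (F n2) imax (hF3 n2) himax1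
      omega
    exact ⟨n2, final n2 (by omega) (by omega)⟩
  push_neg at hC hD
  rcases le_total n1 n2 with h | h
  · obtain ⟨n, hn1', hn2'⟩ := ivt_up F k i (fun n => (hFstep n).1) (n2 - n1) n1
      (le_of_lt hC) (by rw [Nat.add_sub_cancel' h]; exact le_of_lt hD)
    exact ⟨n, final n hn1' hn2'⟩
  · obtain ⟨n, hn1', hn2'⟩ := ivt_down F k i (fun n => (hFstep n).2) (n1 - n2) n2
      (le_of_lt hD) (by rw [Nat.add_sub_cancel' h]; exact le_of_lt hC)
    exact ⟨n, final n hn1' hn2'⟩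
end

section
/- Let G be a connected graph with a shortest path v_0,...,v_t of eccentricity k. Let x,y be vertices of G and let i_min (resp. i_max) be the smallest (resp. largest) index i such that d(v_i,{x,y}) ≤ k. If i_min ≤ k and i_max ≥ t - k, then any shortest path Q between x and y has eccentricity at most 3k in G. -/
open SimpleGraph

variable {V : Type*}

section Aux

variable {G : SimpleGraph V}

lemma walk_mid {u v : V} (p : G.Walk u v) :
    ∀ i j : ℕ, i ≤ j → j ≤ p.length →
      ∃ q : G.Walk (p.getVert i) (p.getVert j), q.length = j - i := by
  induction p with
  | nil =>
    intro i j hij hj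
    simp only [Walk.length_nil, Nat.le_zero] at hj
    subst hj
    have hi : i = 0 := Nat.le_zero.mp hij
    subst hi
    exact ⟨Walk.nil, rfl⟩
  | cons h p ih =>
    intro i j hij hj
    match i, j with
    | 0, 0 =>
      exact ⟨Walk.nil.copy (Walk.getVert_zero _).symm (Walk.getVert_zero _).symm,
        by simp [Walk.length_copy]⟩
    | 0, j + 1 =>
      obtain ⟨q, hq⟩ := ih 0 j (Nat.zero_le _) (by simpa [Nat.succ_le_succ_iff] using hj)
      refine ⟨(Walk.cons h (q.copy (Walk.getVert_zero p) rfl)).copy ?_ ?_, ?_⟩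
      · simp
      · simp [Walk.getVert_cons_succ]
      · simp [hq]
    | i + 1, j + 1 =>
      obtain ⟨q, hq⟩ := ih i j (by omega) (by simpa [Nat.succ_le_succ_iff] using hj)
      refine ⟨q.copy ?_ ?_, ?_⟩
      · simp [Walk.getVert_cons_succ]
      · simp [Walk.getVert_cons_succ]
      · simpa using hq

lemma dist_getVert_le_s5 {u v : V} (p : G.Walk u v) {i j : ℕ} (hij : i ≤ j) (hj : j ≤ p.length) :
    G.dist (p.getVert i) (p.getVert j) ≤ j - i := by
  obtain ⟨q, hq⟩ := walk_mid p i j hij hj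
  exact hq ▸ SimpleGraph.dist_le q

lemma dist_getVert_eq (hG : G.Connected) {u v : V} (p : G.Walk u v)
    (hp : p.length = G.dist u v) {i j : ℕ} (hij : i ≤ j) (hj : j ≤ p.length) :
    G.dist (p.getVert i) (p.getVert j) = j - i := by
  have h1 : G.dist (p.getVert 0) (p.getVert i) ≤ i - 0 :=
    dist_getVert_le_s5 p (Nat.zero_le _) (le_trans hij hj)
  have h2 := dist_getVert_le_s5 p hij hj
  have h3 : G.dist (p.getVert j) (p.getVert p.length) ≤ p.length - j :=
    dist_getVert_le_s5 p hj le_rfl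
  rw [Walk.getVert_zero] at h1
  rw [Walk.getVert_length] at h3
  have t1 : G.dist u v ≤ G.dist u (p.getVert i) + G.dist (p.getVert i) v :=
    hG.dist_triangle
  have t2 : G.dist (p.getVert i) v ≤
      G.dist (p.getVert i) (p.getVert j) + G.dist (p.getVert j) v := hG.dist_triangle
  omega

lemma walkDist_exists' (G : SimpleGraph V) {u v : V} (x : V) (p : G.Walk u v) :
    ∃ w ∈ p.support, G.dist x w = walkDist G x p := by
  have hne : {n | ∃ w ∈ p.support, G.dist x w = n}.Nonempty :=
    ⟨G.dist x u, u, p.start_mem_support, rfl⟩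
  exact Nat.sInf_mem hne

lemma adj_dist_le {u v : V} (h : G.Adj u v) : G.dist u v ≤ 1 :=
  SimpleGraph.dist_le (Walk.cons h Walk.nil)

/-- Crossing lemma: if no vertex of `Q` has an index within `k` of `i`,
and the index of `x` is below `i`, then the index of `y` is below `i` too. -/
lemma cross (hG : G.Connected) {v0 vt : V} (P : G.Walk v0 vt)
    (hP : P.length = G.dist v0 vt) (k i : ℕ) :
    ∀ {x y : V} (Q : G.Walk x y),
      (∀ q ∈ Q.support, ∀ j, j ≤ P.length → G.dist q (P.getVert j) ≤ k →
        j + k < i ∨ i + k < j) →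
      (∀ q : V, ∃ j, j ≤ P.length ∧ G.dist q (P.getVert j) ≤ k) →
      ∀ jx, jx ≤ P.length → G.dist x (P.getVert jx) ≤ k → jx + k < i →
      ∀ jy, jy ≤ P.length → G.dist y (P.getVert jy) ≤ k → jy + k < i := by
  intro x y Q
  induction Q with
  | @nil w =>
    intro H hall jx hjx hdx hlx jy hjy hdy
    rcases H _ (Walk.start_mem_support _) jy hjy hdy with hc | hc
    · exact hc
    · exfalso
      have hle : jx ≤ jy := by omega
      have heq := dist_getVert_eq hG P hP hle hjy
      have t : G.dist (P.getVert jx) (P.getVert jy) ≤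
          G.dist (P.getVert jx) w + G.dist w (P.getVert jy) := hG.dist_triangle
      rw [SimpleGraph.dist_comm (G := G) (u := P.getVert jx) (v := w)] at t
      omega
  | @cons a b c h p ih =>
    intro H hall jx hjx hdx hlx
    obtain ⟨jm, hjm, hdm⟩ := hall b
    have hbmem : b ∈ (Walk.cons h p).support := by
      simp [Walk.support_cons]
    have hside := H b hbmem jm hjm hdm
    have hml : jm + k < i := by
      rcases hside with hc | hc
      · exact hc
      · exfalso
        have hle : jx ≤ jm := by omega
        have heq := dist_getVert_eq hG P hP hle hjm
        have t1 : G.dist (P.getVert jx) (P.getVert jm) ≤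
            G.dist (P.getVert jx) b + G.dist b (P.getVert jm) := hG.dist_triangle
        have t2 : G.dist (P.getVert jx) b ≤
            G.dist (P.getVert jx) a + G.dist a b := hG.dist_triangle
        have hab : G.dist a b ≤ 1 := adj_dist_le h
        rw [SimpleGraph.dist_comm (G := G) (u := P.getVert jx) (v := a)] at t2
        omega
    refine ih ?_ hall jm hjm hdm hml
    intro q hq j hj hd
    exact H q (by simp [Walk.support_cons, hq]) j hj hd

end Aux

theorem stmt5 [Fintype V] (G : SimpleGraph V) (hG : G.Connected)
    {v0 vt : V} (P : G.Walk v0 vt) (hP : IsShortestPath G P) (k : ℕ)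
    (hecc : ∀ z : V, walkDist G z P ≤ k)
    (x y : V) (imin imax : ℕ)
    (himin1 : imin ≤ P.length)
    (himin2 : min (G.dist (P.getVert imin) x) (G.dist (P.getVert imin) y) ≤ k)
    (himin3 : ∀ i < imin, ¬ min (G.dist (P.getVert i) x) (G.dist (P.getVert i) y) ≤ k)
    (himax1 : imax ≤ P.length)
    (himax2 : min (G.dist (P.getVert imax) x) (G.dist (P.getVert imax) y) ≤ k)
    (himax3 : ∀ i, i ≤ P.length → imax < i →
      ¬ min (G.dist (P.getVert i) x) (G.dist (P.getVert i) y) ≤ k)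
    (hlow : imin ≤ k) (hhigh : P.length - k ≤ imax) :
    ∀ Q : G.Walk x y, IsShortestPath G Q → walkEcc G Q ≤ 3 * k := by
  intro Q hQ
  have hPlen : P.length = G.dist v0 vt := hP
  -- every vertex has an index on `P` within distance `k`
  have hall : ∀ q : V, ∃ j, j ≤ P.length ∧ G.dist q (P.getVert j) ≤ k := by
    intro q
    obtain ⟨w, hw, hwd⟩ := walkDist_exists' G q P
    obtain ⟨j, hj1, hj2⟩ := Walk.mem_support_iff_exists_getVert.mp hw
    exact ⟨j, hj2, by rw [hj1]; rw [hwd]; exact hecc q⟩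
  have hxQ : x ∈ Q.support := Q.start_mem_support
  have hyQ : y ∈ Q.support := Q.end_mem_support
  unfold walkEcc
  refine csSup_le ⟨walkDist G x Q, ⟨x, rfl⟩⟩ ?_
  rintro n ⟨z, rfl⟩
  obtain ⟨i, hi, hdzi⟩ := hall z
  have key : ∃ q ∈ Q.support, G.dist z q ≤ 3 * k := by
    rcases lt_or_ge i imin with h1 | h1
    · -- i < imin : use the endpoint close to v_imin
      have hdi : G.dist (P.getVert i) (P.getVert imin) = imin - i :=
        dist_getVert_eq hG P hPlen h1.le himin1
      rcases min_le_iff.mp himin2 with hw | hw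
      · refine ⟨x, hxQ, ?_⟩
        have t1 : G.dist z x ≤ G.dist z (P.getVert i) + G.dist (P.getVert i) x :=
          hG.dist_triangle
        have t2 : G.dist (P.getVert i) x ≤
            G.dist (P.getVert i) (P.getVert imin) + G.dist (P.getVert imin) x :=
          hG.dist_triangle
        omega
      · refine ⟨y, hyQ, ?_⟩
        have t1 : G.dist z y ≤ G.dist z (P.getVert i) + G.dist (P.getVert i) y :=
          hG.dist_triangle
        have t2 : G.dist (P.getVert i) y ≤
            G.dist (P.getVert i) (P.getVert imin) + G.dist (P.getVert imin) y :=
          hG.dist_triangle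
        omega
    rcases le_or_gt i imax with h2 | h2
    · -- imin ≤ i ≤ imax : the main case
      by_cases hq2 : ∃ q ∈ Q.support, G.dist (P.getVert i) q ≤ 2 * k
      · obtain ⟨q, hq, hd⟩ := hq2
        refine ⟨q, hq, ?_⟩
        have t : G.dist z q ≤ G.dist z (P.getVert i) + G.dist (P.getVert i) q :=
          hG.dist_triangle
        omega
      · exfalso
        push_neg at hq2
        have H : ∀ q ∈ Q.support, ∀ j, j ≤ P.length → G.dist q (P.getVert j) ≤ k →
            j + k < i ∨ i + k < j := by
          intro q hq j hj hd
          by_contra hcon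
          push_neg at hcon
          have hdq : 2 * k < G.dist (P.getVert i) q := hq2 q hq
          have t : G.dist (P.getVert i) q ≤
              G.dist (P.getVert i) (P.getVert j) + G.dist (P.getVert j) q :=
            hG.dist_triangle
          rw [SimpleGraph.dist_comm (G := G) (u := P.getVert j) (v := q)] at t
          rcases le_total i j with hij | hij
          · have e := dist_getVert_eq hG P hPlen hij hj
            omega
          · have e := dist_getVert_eq hG P hPlen hij hi
            rw [SimpleGraph.dist_comm (G := G) (u := P.getVert j) (v := P.getVert i)] at e
            omega
        obtain ⟨jx, hjx, hdx⟩ := hall x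
        obtain ⟨jy, hjy, hdy⟩ := hall y
        have H' : ∀ q ∈ Q.reverse.support, ∀ j, j ≤ P.length →
            G.dist q (P.getVert j) ≤ k → j + k < i ∨ i + k < j := by
          intro q hq j hj hd
          exact H q (by simpa using hq) j hj hd
        -- low-side contradiction: some w ∈ {x,y} with d(v_imax, w) ≤ k and jw + k < i
        have lowside : ∀ w : V, w ∈ Q.support → G.dist (P.getVert imax) w ≤ k →
            ∀ jw, jw ≤ P.length → G.dist w (P.getVert jw) ≤ k → jw + k < i → False := by
          intro w hwQ hw jw hjw hdw hlw
          have hj : jw ≤ imax := by omega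
          have e := dist_getVert_eq hG P hPlen hj himax1
          have t : G.dist (P.getVert jw) (P.getVert imax) ≤
              G.dist (P.getVert jw) w + G.dist w (P.getVert imax) := hG.dist_triangle
          rw [SimpleGraph.dist_comm (G := G) (u := P.getVert jw) (v := w),
            SimpleGraph.dist_comm (G := G) (u := w) (v := P.getVert imax)] at t
          have e2 := dist_getVert_eq hG P hPlen h2 himax1
          have t2 : G.dist (P.getVert i) w ≤
              G.dist (P.getVert i) (P.getVert imax) + G.dist (P.getVert imax) w :=
            hG.dist_triangle
          have := hq2 w hwQ
          omega
        have highside : ∀ w : V, w ∈ Q.support → G.dist (P.getVert imin) w ≤ k →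
            ∀ jw, jw ≤ P.length → G.dist w (P.getVert jw) ≤ k → i + k < jw → False := by
          intro w hwQ hw jw hjw hdw hlw
          have hj : imin ≤ jw := by omega
          have e := dist_getVert_eq hG P hPlen hj hjw
          have t : G.dist (P.getVert imin) (P.getVert jw) ≤
              G.dist (P.getVert imin) w + G.dist w (P.getVert jw) := hG.dist_triangle
          have e2 := dist_getVert_eq hG P hPlen h1 hi
          have t2 : G.dist (P.getVert i) w ≤
              G.dist (P.getVert i) (P.getVert imin) + G.dist (P.getVert imin) w :=
            hG.dist_triangle
          rw [SimpleGraph.dist_comm (G := G) (u := P.getVert imin) (v := P.getVert i)] at e2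
          have := hq2 w hwQ
          omega
        rcases H x hxQ jx hjx hdx with hxl | hxh
        · have hyl : jy + k < i := cross hG P hPlen k i Q H hall jx hjx hdx hxl jy hjy hdy
          rcases min_le_iff.mp himax2 with hw | hw
          · exact lowside x hxQ hw jx hjx hdx hxl
          · exact lowside y hyQ hw jy hjy hdy hyl
        · have hyh : i + k < jy := by
            by_contra hc
            have hyl : jy + k < i := by
              rcases H y hyQ jy hjy hdy with h | h
              · exact h
              · omega
            have := cross hG P hPlen k i Q.reverse H' hall jy hjy hdy hyl jx hjx hdx
            omega
          rcases min_le_iff.mp himin2 with hw | hw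
          · exact highside x hxQ hw jx hjx hdx hxh
          · exact highside y hyQ hw jy hjy hdy hyh
    · -- imax < i : use the endpoint close to v_imax
      have hdi : G.dist (P.getVert imax) (P.getVert i) = i - imax :=
        dist_getVert_eq hG P hPlen h2.le hi
      rw [SimpleGraph.dist_comm (G := G) (u := P.getVert imax) (v := P.getVert i)] at hdi
      rcases min_le_iff.mp himax2 with hw | hw
      · refine ⟨x, hxQ, ?_⟩
        have t1 : G.dist z x ≤ G.dist z (P.getVert i) + G.dist (P.getVert i) x :=
          hG.dist_triangle
        have t2 : G.dist (P.getVert i) x ≤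
            G.dist (P.getVert i) (P.getVert imax) + G.dist (P.getVert imax) x :=
          hG.dist_triangle
        omega
      · refine ⟨y, hyQ, ?_⟩
        have t1 : G.dist z y ≤ G.dist z (P.getVert i) + G.dist (P.getVert i) y :=
          hG.dist_triangle
        have t2 : G.dist (P.getVert i) y ≤
            G.dist (P.getVert i) (P.getVert imax) + G.dist (P.getVert imax) y :=
          hG.dist_triangle
        omega
  obtain ⟨q, hq, hdq⟩ := key
  unfold walkDist
  exact le_trans (Nat.sInf_le ⟨q, hq, rfl⟩) hdq
end
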